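/- arXiv:2409.08640 — 5 statements merged into one kernel-verified Lean document; each statement's English description precedes it below -/
import Mathlib

section
/- Let d ≥ 1, let f : ℝ^d → ℝ be differentiable with L-Lipschitz gradient and lower bounded, with f* = ⨅ f > −∞. Let γ > 0 satisfy γ ≤ 1/(2L), and let x, g : ℕ → ℝ^d be sequences with x^{t+1} = x^t − γ·g^t for all t. Then for every T ≥ 1, (1/T)·∑_{t=0}^{T−1} ‖∇f(x^t)‖² ≤ 2(f(x^0) − f*)/(γT) − (1/(2γ²T))·∑_{t=0}^{T−1} ‖x^{t+1} − x^t‖² + (1/T)·∑_{t=0}^{T−1} ‖g^t − ∇f(x^t)‖². -/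
open RealInnerProductSpace

variable {E : Type*} [NormedAddCommGroup E] [InnerProductSpace ℝ E] [CompleteSpace E]

lemma descent_lemma (f : E → ℝ) (L : ℝ)
    (hdiff : Differentiable ℝ f)
    (hLip : ∀ a b, ‖gradient f a - gradient f b‖ ≤ L * ‖a - b‖)
    (hL : 0 ≤ L) (x y : E) :
    f y ≤ f x + ⟪gradient f x, y - x⟫ + L / 2 * ‖y - x‖ ^ 2 := by
  set v := y - x with hv
  have hφderiv : ∀ t : ℝ, HasDerivAt (fun s : ℝ => f (x + s • v))
      ⟪gradient f (x + t • v), v⟫ t := by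
    intro t
    have hline : HasDerivAt (fun s : ℝ => x + s • v) v t := by
      simpa using ((hasDerivAt_id t).smul_const v).const_add x
    have hF := (hdiff (x + t • v)).hasGradientAt.hasFDerivAt
    simpa [Function.comp_def] using hF.comp_hasDerivAt t hline
  have hgradcont : Continuous (gradient f) := by
    have : LipschitzWith (Real.toNNReal L) (gradient f) :=
      LipschitzWith.of_dist_le_mul fun a b => by
        simpa [dist_eq_norm, Real.coe_toNNReal L hL] using hLip a b
    exact this.continuous
  have hcont : Continuous fun t : ℝ => ⟪gradient f (x + t • v), v⟫ := by
    exact (hgradcont.comp (by continuity)).inner continuous_const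
  have hFTC : f y - f x = ∫ t in (0:ℝ)..1, ⟪gradient f (x + t • v), v⟫ := by
    have := intervalIntegral.integral_eq_sub_of_hasDerivAt
      (fun t _ => hφderiv t) (hcont.intervalIntegrable 0 1)
    simp only [one_smul, zero_smul, add_zero] at this
    rw [this, hv]
    simp
  have hbound : ∀ t ∈ Set.Icc (0:ℝ) 1,
      ⟪gradient f (x + t • v), v⟫ ≤ ⟪gradient f x, v⟫ + L * t * ‖v‖ ^ 2 := by
    intro t ht
    have h1 : ⟪gradient f (x + t • v) - gradient f x, v⟫ ≤ L * t * ‖v‖ ^ 2 := by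
      calc ⟪gradient f (x + t • v) - gradient f x, v⟫
          ≤ ‖gradient f (x + t • v) - gradient f x‖ * ‖v‖ := real_inner_le_norm _ _
        _ ≤ (L * ‖(x + t • v) - x‖) * ‖v‖ := by
            apply mul_le_mul_of_nonneg_right (hLip _ _) (norm_nonneg _)
        _ = L * t * ‖v‖ ^ 2 := by
            rw [add_sub_cancel_left, norm_smul, Real.norm_of_nonneg ht.1]
            ring
    have h2 : ⟪gradient f (x + t • v), v⟫ =
        ⟪gradient f x, v⟫ + ⟪gradient f (x + t • v) - gradient f x, v⟫ := by
      rw [inner_sub_left]; ring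
    linarith
  have hint : (∫ t in (0:ℝ)..1, ⟪gradient f (x + t • v), v⟫) ≤
      ∫ t in (0:ℝ)..1, (⟪gradient f x, v⟫ + L * t * ‖v‖ ^ 2) := by
    apply intervalIntegral.integral_mono_on (by norm_num)
      (hcont.intervalIntegrable 0 1) (by apply Continuous.intervalIntegrable; continuity)
    exact hbound
  have hval : (∫ t in (0:ℝ)..1, (⟪gradient f x, v⟫ + L * t * ‖v‖ ^ 2)) =
      ⟪gradient f x, v⟫ + L / 2 * ‖v‖ ^ 2 := by
    rw [intervalIntegral.integral_add (by apply Continuous.intervalIntegrable; continuity)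
      (by apply Continuous.intervalIntegrable; continuity)]
    simp only [intervalIntegral.integral_const, smul_eq_mul]
    have : (∫ t in (0:ℝ)..1, L * t * ‖v‖ ^ 2) = L * ‖v‖^2 * ∫ t in (0:ℝ)..1, t := by
      rw [← intervalIntegral.integral_const_mul]
      congr 1; ext t; ring
    rw [this, integral_id]
    ring
  linarith [hFTC, hint, hval]

/-- Summed descent inequality (first step of the proof of Theorem 1). -/
theorem stmt_1 (d : ℕ) (hd : 1 ≤ d) (f : EuclideanSpace ℝ (Fin d) → ℝ) (L : ℝ)
    (hdiff : Differentiable ℝ f)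
    (hLip : ∀ x y, ‖gradient f x - gradient f y‖ ≤ L * ‖x - y‖)
    (hbdd : BddBelow (Set.range f))
    (γ : ℝ) (hγ : 0 < γ) (hγL : γ ≤ 1 / (2 * L))
    (x g : ℕ → EuclideanSpace ℝ (Fin d))
    (hupd : ∀ t, x (t + 1) = x t - γ • g t)
    (T : ℕ) (hT : 1 ≤ T) :
    (1 / (T : ℝ)) * ∑ t ∈ Finset.range T, ‖gradient f (x t)‖ ^ 2 ≤
      2 * (f (x 0) - ⨅ y, f y) / (γ * T)
        - (1 / (2 * γ ^ 2 * T)) * ∑ t ∈ Finset.range T, ‖x (t + 1) - x t‖ ^ 2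
        + (1 / (T : ℝ)) * ∑ t ∈ Finset.range T, ‖g t - gradient f (x t)‖ ^ 2 := by
  have hL0 : 0 < L := by
    rcases lt_trichotomy L 0 with h | h | h
    · exfalso
      have : 1 / (2 * L) < 0 := by
        apply div_neg_of_pos_of_neg one_pos; linarith
      linarith
    · exfalso; rw [h] at hγL; norm_num at hγL; linarith
    · exact h
  have hLγ : L * γ ≤ 1 / 2 := by
    rw [le_div_iff₀ (by linarith : (0:ℝ) < 2*L)] at hγL
    linarith
  -- per-step inequality
  have hstep : ∀ t : ℕ,
      γ/2 * ‖gradient f (x t)‖^2 + 1/(4*γ) * ‖x (t+1) - x t‖^2 ≤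
        (f (x t) - f (x (t+1))) + γ/2 * ‖g t - gradient f (x t)‖^2 := by
    intro t
    have hd1 := descent_lemma f L hdiff hLip hL0.le (x t) (x (t+1))
    have hδ : x (t+1) - x t = -(γ • g t) := by rw [hupd t]; abel
    rw [hδ] at hd1
    rw [hδ]
    set a := gradient f (x t)
    have hinner : ⟪a, -(γ • g t)⟫ = -(γ * ⟪a, g t⟫) := by
      rw [inner_neg_right, real_inner_smul_right]
    have hnorm : ‖-(γ • g t)‖^2 = γ^2 * ‖g t‖^2 := by
      rw [norm_neg, norm_smul, mul_pow, Real.norm_of_nonneg hγ.le]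
    rw [hinner, hnorm] at hd1
    rw [hnorm]
    have hid : ‖g t - a‖^2 = ‖g t‖^2 - 2 * ⟪a, g t⟫ + ‖a‖^2 := by
      rw [norm_sub_sq_real, real_inner_comm]
    have hkey : 0 ≤ γ * (1 - 2 * (L * γ)) * ‖g t‖^2 := by
      apply mul_nonneg (mul_nonneg hγ.le (by linarith)) (sq_nonneg _)
    have e : 1/(4*γ) * (γ^2 * ‖g t‖^2) = γ/4 * ‖g t‖^2 := by field_simp
    rw [e]
    nlinarith [hd1, hid, hkey]
  have hT0 : (0:ℝ) < T := by exact_mod_cast hT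
  set SA := ∑ t ∈ Finset.range T, ‖gradient f (x t)‖ ^ 2 with hSA
  set SB := ∑ t ∈ Finset.range T, ‖x (t + 1) - x t‖ ^ 2 with hSB
  set SD := ∑ t ∈ Finset.range T, ‖g t - gradient f (x t)‖ ^ 2 with hSD
  have hsum : γ/2 * SA + 1/(4*γ) * SB ≤ (f (x 0) - f (x T)) + γ/2 * SD := by
    have h1 := Finset.sum_le_sum (fun t (_ : t ∈ Finset.range T) => hstep t)
    simpa [Finset.sum_add_distrib, ← Finset.mul_sum,
      Finset.sum_range_sub' (fun i => f (x i))] using h1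
  have hstar : (⨅ y, f y) ≤ f (x T) := ciInf_le hbdd (x T)
  have h2 : 2*γ^2*SA + SB ≤ 4*γ*(f (x 0) - ⨅ y, f y) + 2*γ^2*SD := by
    have h := mul_le_mul_of_nonneg_left hsum (by positivity : (0:ℝ) ≤ 4*γ)
    have e1 : 4*γ*(γ/2 * SA + 1/(4*γ) * SB) = 2*γ^2*SA + SB := by field_simp; ring
    rw [e1] at h
    nlinarith [mul_le_mul_of_nonneg_left hstar (by positivity : (0:ℝ) ≤ 4*γ)]
  have h2' : 2*γ^2*SA ≤ 4*γ*(f (x 0) - ⨅ y, f y) - SB + 2*γ^2*SD := by linarith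
  have hden : (0:ℝ) < 2*γ^2*↑T := by positivity
  calc (1 / (T:ℝ)) * SA = (2*γ^2*SA) / (2*γ^2*↑T) := by field_simp
    _ ≤ (4*γ*(f (x 0) - ⨅ y, f y) - SB + 2*γ^2*SD) / (2*γ^2*↑T) :=
        (div_le_div_iff_of_pos_right hden).mpr h2'
    _ = 2 * (f (x 0) - ⨅ y, f y) / (γ * ↑T) - 1/(2*γ^2*↑T) * SB + (1/(T:ℝ)) * SD := by
        field_simp; ring
end

section
/- Let d, n ≥ 1, f < n, κ ≥ 0, and let F : (ℝ^d)^n → ℝ^d be an (f,κ)-robust aggregation rule. Let H ⊆ {1,…,n} with |H| = n − f. Let g_1, …, g_n ∈ ℝ^d, and for i ∈ H let v_i, h_i ∈ ℝ^d. Write C_i = g_i − v_i, M_i = v_i − h_i, and h̄ = (1/(n−f))·∑_{i∈H} h_i, and suppose (1/(n−f))·∑_{i∈H} ‖h_i − h̄‖² ≤ G². Then ‖F(g_1,…,g_n) − ḡ‖² ≤ (6κ(n−f−1)/(n−f)²)·∑_{i∈H} (‖C_i‖² + ‖M_i‖²) + (6κ(n−f−1)/(n−f))·G², where ḡ = (1/(n−f))·∑_{i∈H}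 g_i. -/
open Finset

lemma var_le_aux {ι E : Type*} [NormedAddCommGroup E] [InnerProductSpace ℝ E]
    (S : Finset ι) (x : ι → E) (m : ℝ) (hm : (S.card : ℝ) = m) (hm0 : 0 < m) :
    ∑ i ∈ S, ‖x i - m⁻¹ • ∑ j ∈ S, x j‖ ^ 2 ≤ ∑ i ∈ S, ‖x i‖ ^ 2 := by
  set s := ∑ j ∈ S, x j with hs
  have expand : ∀ i ∈ S, ‖x i - m⁻¹ • s‖ ^ 2
      = ‖x i‖ ^ 2 - 2 * m⁻¹ * inner ℝ (x i) s + m⁻¹ ^ 2 * ‖s‖ ^ 2 := by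
    intro i _
    rw [@norm_sub_sq_real _ _ _ (x i) (m⁻¹ • s), real_inner_smul_right, norm_smul]
    simp [abs_of_pos (inv_pos.mpr hm0), mul_pow]
    ring
  rw [Finset.sum_congr rfl expand]
  rw [Finset.sum_add_distrib, Finset.sum_sub_distrib, ← Finset.mul_sum, ← Finset.sum_mul,
    Finset.sum_const, ← sum_inner, ← hs, real_inner_self_eq_norm_sq]
  rw [nsmul_eq_mul, hm]
  have hs2 : 0 ≤ ‖s‖ ^ 2 := sq_nonneg _
  have hmm : m * m⁻¹ ^ 2 = m⁻¹ := by field_simp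
  rw [hmm]
  nlinarith [mul_nonneg (le_of_lt (inv_pos.mpr hm0)) hs2]

lemma three_sq {E : Type*} [NormedAddCommGroup E] (a b c : E) :
    ‖a + b + c‖ ^ 2 ≤ 3 * (‖a‖ ^ 2 + ‖b‖ ^ 2 + ‖c‖ ^ 2) := by
  have h := norm_add₃_le (a := a) (b := b) (c := c)
  nlinarith [norm_nonneg a, norm_nonneg b, norm_nonneg c, norm_nonneg (a+b+c),
    sq_nonneg (‖a‖ - ‖b‖), sq_nonneg (‖a‖ - ‖c‖), sq_nonneg (‖b‖ - ‖c‖)]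

lemma final_alg (κ m T G2 : ℝ) (hκ : 0 ≤ κ) (hm2 : 2 ≤ m) (hT : 0 ≤ T) (hG : 0 ≤ G2) :
    κ / m * (3 * (T + m * G2)) ≤ 6 * κ * (m - 1) / m ^ 2 * T + 6 * κ * (m - 1) / m * G2 := by
  have hm0 : (0:ℝ) < m := by linarith
  have h7 : κ / m * 3 ≤ 6 * κ * (m - 1) / m ^ 2 := by
    have e : κ / m * 3 = 3 * κ / m := by ring
    rw [e, div_le_div_iff₀ hm0 (by positivity)]
    nlinarith [mul_nonneg (mul_nonneg hκ (by linarith : (0:ℝ) ≤ m - 2)) hm0.le]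
  have h8 : 3 * κ ≤ 6 * κ * (m - 1) / m := by
    rw [le_div_iff₀ hm0]
    nlinarith [mul_nonneg hκ (by linarith : (0:ℝ) ≤ m - 2)]
  have main : κ / m * (3 * (T + m * G2)) = (κ / m * 3) * T + 3 * κ * G2 := by
    field_simp
  rw [main]
  have t1 := mul_le_mul_of_nonneg_right h7 hT
  have t2 := mul_le_mul_of_nonneg_right h8 hG
  linarith

/-- Lemma 2 (robust aggregation error). -/
theorem stmt_2 (d n f : ℕ) (hd : 1 ≤ d) (hn : 1 ≤ n) (hfn : f < n)
    (κ : ℝ) (hκ : 0 ≤ κ)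
    (F : (Fin n → EuclideanSpace ℝ (Fin d)) → EuclideanSpace ℝ (Fin d))
    (hF : ∀ (u : Fin n → EuclideanSpace ℝ (Fin d)) (S : Finset (Fin n)),
      S.card = n - f →
      ‖F u - ((n : ℝ) - f)⁻¹ • ∑ i ∈ S, u i‖ ^ 2 ≤
        (κ / ((n : ℝ) - f)) * ∑ i ∈ S, ‖u i - ((n : ℝ) - f)⁻¹ • ∑ j ∈ S, u j‖ ^ 2)
    (H : Finset (Fin n)) (hH : H.card = n - f)
    (g v h : Fin n → EuclideanSpace ℝ (Fin d)) (G : ℝ)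
    (hhet : ((n : ℝ) - f)⁻¹ *
        ∑ i ∈ H, ‖h i - ((n : ℝ) - f)⁻¹ • ∑ j ∈ H, h j‖ ^ 2 ≤ G ^ 2) :
    ‖F g - ((n : ℝ) - f)⁻¹ • ∑ i ∈ H, g i‖ ^ 2 ≤
      (6 * κ * ((n : ℝ) - f - 1) / ((n : ℝ) - f) ^ 2) *
          ∑ i ∈ H, (‖g i - v i‖ ^ 2 + ‖v i - h i‖ ^ 2)
        + (6 * κ * ((n : ℝ) - f - 1) / ((n : ℝ) - f)) * G ^ 2 := by
  have hm1 : (1:ℝ) ≤ (n:ℝ) - f := by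
    have : (f:ℝ) + 1 ≤ n := by exact_mod_cast hfn
    linarith
  have hm0 : (0:ℝ) < (n:ℝ) - f := by linarith
  have hcard : (H.card : ℝ) = (n:ℝ) - f := by
    rw [hH, Nat.cast_sub hfn.le]
  have key := hF g H hH
  by_cases h1 : n - f = 1
  · -- degenerate case: H is a singleton
    have hm : (n:ℝ) - f = 1 := by rw [← hcard, hH, h1]; norm_num
    obtain ⟨i₀, hi₀⟩ := Finset.card_eq_one.mp (by rw [hH, h1])
    rw [hm, hi₀] at key
    simp at key
    rw [hm, hi₀]
    simp
    simpa [sub_eq_zero] using key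
  · -- main case: n - f ≥ 2
    have hm2 : (2:ℝ) ≤ (n:ℝ) - f := by
      have h2 : 2 ≤ n - f := by omega
      calc (2:ℝ) = ((2:ℕ):ℝ) := by norm_num
        _ ≤ ((n - f : ℕ):ℝ) := by exact_mod_cast h2
        _ = (n:ℝ) - f := by rw [Nat.cast_sub hfn.le]
    set m : ℝ := (n:ℝ) - f with hmdef
    set C : Fin n → EuclideanSpace ℝ (Fin d) := fun i => g i - v i with hC
    set M : Fin n → EuclideanSpace ℝ (Fin d) := fun i => v i - h i with hM
    have hsumg : ∑ i ∈ H, g i = (∑ i ∈ H, C i) + (∑ i ∈ H, M i) + ∑ i ∈ H, h i := by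
      rw [← Finset.sum_add_distrib, ← Finset.sum_add_distrib]
      refine Finset.sum_congr rfl fun i _ => ?_
      simp only [hC, hM]
      abel
    have decomp : ∀ i ∈ H, g i - m⁻¹ • ∑ j ∈ H, g j
        = (C i - m⁻¹ • ∑ j ∈ H, C j) + (M i - m⁻¹ • ∑ j ∈ H, M j)
          + (h i - m⁻¹ • ∑ j ∈ H, h j) := by
      intro i _
      have hg : g i = C i + M i + h i := by simp only [hC, hM]; abel
      rw [hsumg, smul_add, smul_add, hg]
      abel
    have step1 : ∑ i ∈ H, ‖g i - m⁻¹ • ∑ j ∈ H, g j‖ ^ 2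
        ≤ ∑ i ∈ H, (3 * (‖C i - m⁻¹ • ∑ j ∈ H, C j‖ ^ 2
            + ‖M i - m⁻¹ • ∑ j ∈ H, M j‖ ^ 2 + ‖h i - m⁻¹ • ∑ j ∈ H, h j‖ ^ 2)) := by
      refine Finset.sum_le_sum fun i hi => ?_
      rw [decomp i hi]
      exact three_sq _ _ _
    have hCv := var_le_aux H C m hcard hm0
    have hMv := var_le_aux H M m hcard hm0
    have hhv : ∑ i ∈ H, ‖h i - m⁻¹ • ∑ j ∈ H, h j‖ ^ 2 ≤ m * G ^ 2 := by
      have := mul_le_mul_of_nonneg_left hhet hm0.le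
      calc ∑ i ∈ H, ‖h i - m⁻¹ • ∑ j ∈ H, h j‖ ^ 2
          = m * (m⁻¹ * ∑ i ∈ H, ‖h i - m⁻¹ • ∑ j ∈ H, h j‖ ^ 2) := by
            field_simp
        _ ≤ m * G ^ 2 := this
    have hTC : (0:ℝ) ≤ ∑ i ∈ H, ‖C i‖ ^ 2 := Finset.sum_nonneg fun i _ => sq_nonneg _
    have hTM : (0:ℝ) ≤ ∑ i ∈ H, ‖M i‖ ^ 2 := Finset.sum_nonneg fun i _ => sq_nonneg _
    have hG2 : (0:ℝ) ≤ G ^ 2 := sq_nonneg _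
    have step2 : ∑ i ∈ H, ‖g i - m⁻¹ • ∑ j ∈ H, g j‖ ^ 2
        ≤ 3 * ((∑ i ∈ H, ‖C i‖ ^ 2) + (∑ i ∈ H, ‖M i‖ ^ 2) + m * G ^ 2) := by
      refine step1.trans ?_
      rw [← Finset.mul_sum]
      have : ∑ i ∈ H, (‖C i - m⁻¹ • ∑ j ∈ H, C j‖ ^ 2
            + ‖M i - m⁻¹ • ∑ j ∈ H, M j‖ ^ 2 + ‖h i - m⁻¹ • ∑ j ∈ H, h j‖ ^ 2)
          = (∑ i ∈ H, ‖C i - m⁻¹ • ∑ j ∈ H, C j‖ ^ 2)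
            + (∑ i ∈ H, ‖M i - m⁻¹ • ∑ j ∈ H, M j‖ ^ 2)
            + ∑ i ∈ H, ‖h i - m⁻¹ • ∑ j ∈ H, h j‖ ^ 2 := by
        rw [Finset.sum_add_distrib, Finset.sum_add_distrib]
      rw [this]
      linarith [hCv, hMv, hhv]
    have hsplit : ∑ i ∈ H, (‖g i - v i‖ ^ 2 + ‖v i - h i‖ ^ 2)
        = (∑ i ∈ H, ‖C i‖ ^ 2) + ∑ i ∈ H, ‖M i‖ ^ 2 := by
      rw [Finset.sum_add_distrib]
    rw [hsplit]
    have hS0 : (0:ℝ) ≤ ∑ i ∈ H, ‖g i - m⁻¹ • ∑ j ∈ H, g j‖ ^ 2 :=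
      Finset.sum_nonneg fun i _ => sq_nonneg _
    have key2 : ‖F g - m⁻¹ • ∑ i ∈ H, g i‖ ^ 2
        ≤ κ / m * (3 * ((∑ i ∈ H, ‖C i‖ ^ 2) + (∑ i ∈ H, ‖M i‖ ^ 2) + m * G ^ 2)) :=
      key.trans (by
        apply mul_le_mul_of_nonneg_left step2 (div_nonneg hκ hm0.le))
    exact key2.trans (final_alg κ m _ _ hκ hm2 (add_nonneg hTC hTM) hG2)
end

section
/- Let d, n ≥ 1, f < n, κ ≥ 0, and let F : (ℝ^d)^n → ℝ^d be an (f,κ)-robust aggregation rule. Let H ⊆ {1,…,n} with |H| = n − f ≥ 1. Let g_1, …, g_n ∈ ℝ^d and, for i ∈ H, let v_i, h_i ∈ ℝ^d; write C_i = g_i − v_i, M_i = v_i − h_i, h̄ = (1/(n−f))·∑_{i∈H} h_i, v̄ = (1/(n−f))·∑_{i∈H} v_i, and suppose (1/(n−f))·∑_{i∈H} ‖h_i − h̄‖² ≤ G². Then ‖F(g_1,…,g_n) − h̄‖² ≤ (3(6κ+1)/(n−f))·∑_{i∈H} ‖C_i‖² + (18κ/(n−f))·∑_{i∈H} ‖M_i‖²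 + 3‖v̄ − h̄‖² + 18κ·G². -/
set_option maxHeartbeats 1000000

open Finset

variable {E : Type*} [NormedAddCommGroup E] [InnerProductSpace ℝ E] {ι : Type*}

lemma aux_var (S : Finset ι) (x : ι → E) (c : E) (m : ℝ) (hm : m = S.card) (hm0 : 0 < m) :
    ∑ i ∈ S, ‖x i - m⁻¹ • ∑ j ∈ S, x j‖ ^ 2 ≤ ∑ i ∈ S, ‖x i - c‖ ^ 2 := by
  set xb : E := m⁻¹ • ∑ j ∈ S, x j with hxb
  have key : ∀ i, ‖x i - c‖ ^ 2
      = ‖x i - xb‖ ^ 2 + 2 * inner ℝ (x i - xb) (xb - c) + ‖xb - c‖ ^ 2 := by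
    intro i
    have h : x i - c = (x i - xb) + (xb - c) := by abel
    rw [h, ← real_inner_self_eq_norm_sq, inner_add_add_self,
      real_inner_self_eq_norm_sq, real_inner_self_eq_norm_sq,
      real_inner_comm (xb - c) (x i - xb)]
    ring
  have hsum : ∑ i ∈ S, (x i - xb) = 0 := by
    rw [Finset.sum_sub_distrib, Finset.sum_const, hxb,
      ← Nat.cast_smul_eq_nsmul ℝ, smul_smul, ← hm,
      mul_inv_cancel₀ hm0.ne', one_smul, sub_self]
  calc ∑ i ∈ S, ‖x i - xb‖ ^ 2
      ≤ ∑ i ∈ S, ‖x i - xb‖ ^ 2 + ‖xb - c‖ ^ 2 * S.card := by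
        have : (0:ℝ) ≤ ‖xb - c‖ ^ 2 * S.card := by positivity
        linarith
    _ = ∑ i ∈ S, ‖x i - c‖ ^ 2 := by
        simp only [key]
        rw [Finset.sum_add_distrib, Finset.sum_add_distrib, ← Finset.mul_sum,
          ← sum_inner, hsum, inner_zero_left, Finset.sum_const, nsmul_eq_mul]
        ring

lemma aux_jensen (S : Finset ι) (x : ι → E) (m : ℝ) (hm : m = S.card) (hm0 : 0 < m) :
    ‖m⁻¹ • ∑ i ∈ S, x i‖ ^ 2 ≤ m⁻¹ * ∑ i ∈ S, ‖x i‖ ^ 2 := by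
  have h1 : ‖∑ i ∈ S, x i‖ ≤ ∑ i ∈ S, ‖x i‖ := norm_sum_le _ _
  have h2 : (∑ i ∈ S, ‖x i‖) ^ 2 ≤ S.card * ∑ i ∈ S, ‖x i‖ ^ 2 :=
    sq_sum_le_card_mul_sum_sq
  have h3 : ‖∑ i ∈ S, x i‖ ^ 2 ≤ m * ∑ i ∈ S, ‖x i‖ ^ 2 := by
    calc ‖∑ i ∈ S, x i‖ ^ 2 ≤ (∑ i ∈ S, ‖x i‖) ^ 2 :=
          pow_le_pow_left₀ (norm_nonneg _) h1 2
      _ ≤ m * ∑ i ∈ S, ‖x i‖ ^ 2 := by rw [hm]; exact_mod_cast h2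
  rw [norm_smul, Real.norm_eq_abs, abs_of_pos (by positivity : (0:ℝ) < m⁻¹),
    mul_pow]
  calc m⁻¹ ^ 2 * ‖∑ i ∈ S, x i‖ ^ 2 ≤ m⁻¹ ^ 2 * (m * ∑ i ∈ S, ‖x i‖ ^ 2) := by
        exact mul_le_mul_of_nonneg_left h3 (by positivity)
    _ = m⁻¹ * ∑ i ∈ S, ‖x i‖ ^ 2 := by field_simp

lemma aux_three (a b c : E) : ‖a + b + c‖ ^ 2 ≤ 3 * (‖a‖ ^ 2 + ‖b‖ ^ 2 + ‖c‖ ^ 2) := by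
  have h1 : ‖a + b + c‖ ≤ ‖a‖ + ‖b‖ + ‖c‖ :=
    (norm_add_le _ _).trans (by gcongr; exact norm_add_le _ _)
  have h2 := pow_le_pow_left₀ (norm_nonneg _) h1 2
  nlinarith [sq_nonneg (‖a‖ - ‖b‖), sq_nonneg (‖a‖ - ‖c‖), sq_nonneg (‖b‖ - ‖c‖)]

/-- Combined aggregation-error bound from the proof of Theorem 1. -/
theorem stmt_6 (d n f : ℕ) (hd : 1 ≤ d) (hn : 1 ≤ n) (hfn : f < n)
    (κ : ℝ) (hκ : 0 ≤ κ)
    (F : (Fin n → EuclideanSpace ℝ (Fin d)) → EuclideanSpace ℝ (Fin d))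
    (hF : ∀ (u : Fin n → EuclideanSpace ℝ (Fin d)) (S : Finset (Fin n)),
      S.card = n - f →
      ‖F u - ((n : ℝ) - f)⁻¹ • ∑ i ∈ S, u i‖ ^ 2 ≤
        (κ / ((n : ℝ) - f)) * ∑ i ∈ S, ‖u i - ((n : ℝ) - f)⁻¹ • ∑ j ∈ S, u j‖ ^ 2)
    (H : Finset (Fin n)) (hH : H.card = n - f)
    (g v h : Fin n → EuclideanSpace ℝ (Fin d)) (G : ℝ)
    (hhet : ((n : ℝ) - f)⁻¹ *
        ∑ i ∈ H, ‖h i - ((n : ℝ) - f)⁻¹ • ∑ j ∈ H, h j‖ ^ 2 ≤ G ^ 2) :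
    ‖F g - ((n : ℝ) - f)⁻¹ • ∑ i ∈ H, h i‖ ^ 2 ≤
      (3 * (6 * κ + 1) / ((n : ℝ) - f)) * ∑ i ∈ H, ‖g i - v i‖ ^ 2
        + (18 * κ / ((n : ℝ) - f)) * ∑ i ∈ H, ‖v i - h i‖ ^ 2
        + 3 * ‖((n : ℝ) - f)⁻¹ • (∑ i ∈ H, v i) - ((n : ℝ) - f)⁻¹ • ∑ i ∈ H, h i‖ ^ 2
        + 18 * κ * G ^ 2 := by
  set m : ℝ := (n : ℝ) - f with hmdef
  have hm0 : 0 < m := by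
    have : (f : ℝ) < n := by exact_mod_cast hfn
    linarith
  have hm : m = H.card := by
    rw [hH, Nat.cast_sub hfn.le]
  set gb : EuclideanSpace ℝ (Fin d) := m⁻¹ • ∑ i ∈ H, g i with hgb
  set vb : EuclideanSpace ℝ (Fin d) := m⁻¹ • ∑ i ∈ H, v i with hvb
  set hb : EuclideanSpace ℝ (Fin d) := m⁻¹ • ∑ i ∈ H, h i with hhb
  set SC : ℝ := ∑ i ∈ H, ‖g i - v i‖ ^ 2 with hSC
  set SM : ℝ := ∑ i ∈ H, ‖v i - h i‖ ^ 2 with hSM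
  have hSCnn : 0 ≤ SC := Finset.sum_nonneg fun i _ => by positivity
  have hSMnn : 0 ≤ SM := Finset.sum_nonneg fun i _ => by positivity
  have hGnn : (0:ℝ) ≤ G ^ 2 := by
    refine le_trans ?_ hhet
    have : (0:ℝ) ≤ ∑ i ∈ H, ‖h i - hb‖ ^ 2 := Finset.sum_nonneg fun i _ => by positivity
    positivity
  -- sum of squared deviations of h bounded by m * G^2
  have hSH : ∑ i ∈ H, ‖h i - hb‖ ^ 2 ≤ m * G ^ 2 := by
    have := mul_le_mul_of_nonneg_left hhet hm0.le
    rwa [← mul_assoc, mul_inv_cancel₀ hm0.ne', one_mul] at this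
  -- robustness bound
  have hA : ‖F g - gb‖ ^ 2 ≤ (κ / m) * ∑ i ∈ H, ‖g i - gb‖ ^ 2 := hF g H hH
  -- variance: mean minimizes
  have hvar : ∑ i ∈ H, ‖g i - gb‖ ^ 2 ≤ ∑ i ∈ H, ‖g i - hb‖ ^ 2 :=
    aux_var H g hb m hm hm0
  -- per-term triple split
  have hsplit : ∑ i ∈ H, ‖g i - hb‖ ^ 2 ≤ 3 * SC + 3 * SM + 3 * ∑ i ∈ H, ‖h i - hb‖ ^ 2 := by
    have key : ∀ i ∈ H, ‖g i - hb‖ ^ 2 ≤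
        3 * (‖g i - v i‖ ^ 2 + ‖v i - h i‖ ^ 2 + ‖h i - hb‖ ^ 2) := by
      intro i _
      have e : g i - hb = (g i - v i) + (v i - h i) + (h i - hb) := by abel
      rw [e]; exact aux_three _ _ _
    calc ∑ i ∈ H, ‖g i - hb‖ ^ 2
        ≤ ∑ i ∈ H, 3 * (‖g i - v i‖ ^ 2 + ‖v i - h i‖ ^ 2 + ‖h i - hb‖ ^ 2) :=
          Finset.sum_le_sum key
      _ = 3 * SC + 3 * SM + 3 * ∑ i ∈ H, ‖h i - hb‖ ^ 2 := by
          rw [hSC, hSM, ← Finset.mul_sum]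
          rw [Finset.sum_add_distrib, Finset.sum_add_distrib]
          ring
  have hA2 : ‖F g - gb‖ ^ 2 ≤ 3 * (κ / m) * SC + 3 * (κ / m) * SM + 3 * κ * G ^ 2 := by
    have h1 : ‖F g - gb‖ ^ 2 ≤ (κ / m) * (3 * SC + 3 * SM + 3 * ∑ i ∈ H, ‖h i - hb‖ ^ 2) :=
      hA.trans (mul_le_mul_of_nonneg_left (hvar.trans hsplit) (div_nonneg hκ hm0.le))
    have h2 : (κ / m) * (3 * ∑ i ∈ H, ‖h i - hb‖ ^ 2) ≤ 3 * κ * G ^ 2 := by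
      have := mul_le_mul_of_nonneg_left hSH (div_nonneg hκ hm0.le)
      calc (κ / m) * (3 * ∑ i ∈ H, ‖h i - hb‖ ^ 2)
          ≤ (κ / m) * (3 * (m * G ^ 2)) := by
            have h3 : ∑ i ∈ H, ‖h i - hb‖ ^ 2 ≤ m * G ^ 2 := hSH
            nlinarith [div_nonneg hκ hm0.le]
        _ = 3 * κ * G ^ 2 := by field_simp
    nlinarith [div_nonneg hκ hm0.le]
  -- Jensen for average of C
  have hB : ‖gb - vb‖ ^ 2 ≤ m⁻¹ * SC := by
    have e : gb - vb = m⁻¹ • ∑ i ∈ H, (g i - v i) := by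
      rw [hgb, hvb, Finset.sum_sub_distrib, smul_sub]
    rw [e]; exact aux_jensen H (fun i => g i - v i) m hm hm0
  -- triple decomposition of the goal
  have hmain : ‖F g - hb‖ ^ 2 ≤ 3 * (‖F g - gb‖ ^ 2 + ‖gb - vb‖ ^ 2 + ‖vb - hb‖ ^ 2) := by
    have e : F g - hb = (F g - gb) + (gb - vb) + (vb - hb) := by abel
    rw [e]; exact aux_three _ _ _
  have hinv : (0:ℝ) ≤ m⁻¹ := by positivity
  have hCnn : (0:ℝ) ≤ ‖vb - hb‖ ^ 2 := by positivity
  rw [div_eq_mul_inv (3 * (6 * κ + 1)) m, div_eq_mul_inv (18 * κ) m]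
  simp only [div_eq_mul_inv] at hA2
  nlinarith [mul_nonneg (mul_nonneg hκ hinv) hSCnn, mul_nonneg (mul_nonneg hκ hinv) hSMnn,
    mul_nonneg hκ hGnn]
end

section
/- Let d ≥ 1, α ∈ (0,1], η ∈ (0,1], σ ≥ 0, L_i ≥ 0. Let (Ω₁, μ₁) and (Ω₂, μ₂) be probability spaces. Let 𝒞 : ℝ^d → Ω₂ → ℝ^d be such that for every z ∈ ℝ^d, ω ↦ 𝒞(z)(ω) is measurable and ∫_{Ω₂} ‖𝒞(z)(ω) − z‖² dμ₂(ω) ≤ (1−α)‖z‖². Let ℒ : ℝ^d → ℝ be differentiable with L_i-Lipschitz gradient. Fix x₀, x, v₀, g₀ ∈ ℝ^d and let s : Ω₁ → ℝ^d be square-integrable with ∫_{Ω₁} s dμ₁ = ∇ℒ(x) and ∫_{Ω₁} ‖s(ω) − ∇ℒ(x)‖² dμ₁(ω) ≤ σ². Define v(ω₁) = (1−η)v₀ + η·s(ω₁) and g(ω₁,ω₂) = g₀ + 𝒞(v(ω₁) − g₀)(ω₂). Then ∫_{Ω₁×Ω₂} ‖g(ω₁,ω₂) − v(ω₁)‖²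 d(μ₁ × μ₂) ≤ (1 − α/2)·‖g₀ − v₀‖² + (4η²/α)·‖v₀ − ∇ℒ(x₀)‖² + (4η²L_i²/α)·‖x − x₀‖² + (1−α)·η²σ². -/
open MeasureTheory

lemma young_sq {E : Type*} [NormedAddCommGroup E] [InnerProductSpace ℝ E]
    (a b : E) (β : ℝ) (hβ : 0 < β) :
    ‖a + b‖ ^ 2 ≤ (1 + β) * ‖a‖ ^ 2 + (1 + 1 / β) * ‖b‖ ^ 2 := by
  have h := norm_add_sq_real a b
  have h2 : inner ℝ a b ≤ ‖a‖ * ‖b‖ := real_inner_le_norm a b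
  have h3 : 0 ≤ (β * ‖a‖ - ‖b‖) ^ 2 := sq_nonneg _
  rw [h]
  have key : 2 * inner ℝ a b ≤ β * ‖a‖ ^ 2 + (1 / β) * ‖b‖ ^ 2 := by
    have hb : (1 / β) * ‖b‖ ^ 2 = ‖b‖ ^ 2 / β := by ring
    rw [hb, ← sub_nonneg]
    have : β * ‖a‖ ^ 2 + ‖b‖ ^ 2 / β - 2 * inner ℝ a b
        = ((β * ‖a‖ - ‖b‖) ^ 2 + 2 * β * (‖a‖ * ‖b‖ - inner ℝ a b)) / β := by
      field_simp; ring
    rw [this]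
    apply div_nonneg _ hβ.le
    nlinarith
  nlinarith

set_option maxHeartbeats 1000000

/-- One-step compression-error recursion (proof of Lemma 3). -/
theorem stmt_7 (d : ℕ) (hd : 1 ≤ d) (α η σ Li : ℝ)
    (hα : α ∈ Set.Ioc (0 : ℝ) 1) (hη : η ∈ Set.Ioc (0 : ℝ) 1)
    (hσ : 0 ≤ σ) (hLi : 0 ≤ Li)
    {Ω₁ Ω₂ : Type*} [MeasurableSpace Ω₁] [MeasurableSpace Ω₂]
    (μ₁ : Measure Ω₁) (μ₂ : Measure Ω₂)
    [IsProbabilityMeasure μ₁] [IsProbabilityMeasure μ₂]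
    (C : EuclideanSpace ℝ (Fin d) → Ω₂ → EuclideanSpace ℝ (Fin d))
    (hCmeas : ∀ z, Measurable (C z))
    (hC : ∀ z, ∫ ω, ‖C z ω - z‖ ^ 2 ∂μ₂ ≤ (1 - α) * ‖z‖ ^ 2)
    (ℒ : EuclideanSpace ℝ (Fin d) → ℝ)
    (hdiff : Differentiable ℝ ℒ)
    (hLip : ∀ x y, ‖gradient ℒ x - gradient ℒ y‖ ≤ Li * ‖x - y‖)
    (x₀ x v₀ g₀ : EuclideanSpace ℝ (Fin d))
    (s : Ω₁ → EuclideanSpace ℝ (Fin d))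
    (hs2 : MemLp s 2 μ₁)
    (hsmean : ∫ ω, s ω ∂μ₁ = gradient ℒ x)
    (hsvar : ∫ ω, ‖s ω - gradient ℒ x‖ ^ 2 ∂μ₁ ≤ σ ^ 2) :
    ∫ ω : Ω₁ × Ω₂,
        ‖(g₀ + C ((1 - η) • v₀ + η • s ω.1 - g₀) ω.2)
            - ((1 - η) • v₀ + η • s ω.1)‖ ^ 2 ∂(μ₁.prod μ₂) ≤
      (1 - α / 2) * ‖g₀ - v₀‖ ^ 2 + (4 * η ^ 2 / α) * ‖v₀ - gradient ℒ x₀‖ ^ 2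
        + (4 * η ^ 2 * Li ^ 2 / α) * ‖x - x₀‖ ^ 2 + (1 - α) * η ^ 2 * σ ^ 2 := by
  obtain ⟨hα0, hα1⟩ := hα
  obtain ⟨hη0, hη1⟩ := hη
  set G := gradient ℒ x with hG
  set G₀ := gradient ℒ x₀ with hG₀
  have hA0 : (0:ℝ) ≤ ‖g₀ - v₀‖ ^ 2 := sq_nonneg _
  have hB10 : (0:ℝ) ≤ ‖v₀ - G₀‖ ^ 2 := sq_nonneg _
  have hB20 : (0:ℝ) ≤ ‖x - x₀‖ ^ 2 := sq_nonneg _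
  have h1mα : (0:ℝ) ≤ 1 - α := by linarith
  have hRHS : 0 ≤ (1 - α / 2) * ‖g₀ - v₀‖ ^ 2 + (4 * η ^ 2 / α) * ‖v₀ - G₀‖ ^ 2
      + (4 * η ^ 2 * Li ^ 2 / α) * ‖x - x₀‖ ^ 2 + (1 - α) * η ^ 2 * σ ^ 2 := by
    have h1 : (0:ℝ) ≤ 1 - α / 2 := by linarith
    positivity
  set z : Ω₁ → EuclideanSpace ℝ (Fin d) :=
    fun ω => (1 - η) • v₀ + η • s ω - g₀ with hz
  have hrw : ∀ ω : Ω₁ × Ω₂,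
      ‖(g₀ + C ((1 - η) • v₀ + η • s ω.1 - g₀) ω.2)
          - ((1 - η) • v₀ + η • s ω.1)‖ ^ 2
        = ‖C (z ω.1) ω.2 - z ω.1‖ ^ 2 := by
    intro ω
    have h : (g₀ + C ((1 - η) • v₀ + η • s ω.1 - g₀) ω.2)
        - ((1 - η) • v₀ + η • s ω.1) = C (z ω.1) ω.2 - z ω.1 := by
      simp only [hz]; module
    rw [h]
  rw [integral_congr_ae (Filter.Eventually.of_forall hrw)]
  by_cases hF : Integrable
      (fun ω : Ω₁ × Ω₂ => ‖C (z ω.1) ω.2 - z ω.1‖ ^ 2) (μ₁.prod μ₂)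
  swap
  · rw [integral_undef hF]; exact hRHS
  -- integrability facts
  have hs_int : Integrable s μ₁ := hs2.integrable one_le_two
  set e : Ω₁ → EuclideanSpace ℝ (Fin d) := fun ω => s ω - G with he
  have he2 : MemLp e 2 μ₁ := hs2.sub (memLp_const G)
  have he_int : Integrable e μ₁ := hs_int.sub (integrable_const G)
  have he_mean : ∫ ω, e ω ∂μ₁ = 0 := by
    rw [he, integral_sub hs_int (integrable_const G), hsmean, integral_const,
      probReal_univ, one_smul, sub_self]
  set m : EuclideanSpace ℝ (Fin d) := (1 - η) • v₀ + η • G - g₀ with hm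
  have hz_eq : z = fun ω => m + η • e ω := by
    funext ω
    simp only [hz, hm, he]
    module
  have hz2 : MemLp z 2 μ₁ := by
    rw [hz_eq]
    exact (memLp_const m).add (he2.const_smul η)
  have hz_sq_int : Integrable (fun ω => ‖z ω‖ ^ 2) μ₁ :=
    (memLp_two_iff_integrable_sq_norm hz2.aestronglyMeasurable).mp hz2
  have he_sq_int : Integrable (fun ω => ‖e ω‖ ^ 2) μ₁ :=
    (memLp_two_iff_integrable_sq_norm he2.aestronglyMeasurable).mp he2
  -- step 1: Fubini + pointwise contraction of the compressor
  have step1 : ∫ ω : Ω₁ × Ω₂, ‖C (z ω.1) ω.2 - z ω.1‖ ^ 2 ∂(μ₁.prod μ₂)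
      ≤ (1 - α) * ∫ ω, ‖z ω‖ ^ 2 ∂μ₁ := by
    rw [integral_prod _ hF]
    calc ∫ ω₁, ∫ ω₂, ‖C (z ω₁) ω₂ - z ω₁‖ ^ 2 ∂μ₂ ∂μ₁
        ≤ ∫ ω₁, (1 - α) * ‖z ω₁‖ ^ 2 ∂μ₁ := by
          apply integral_mono hF.integral_prod_left (hz_sq_int.const_mul (1 - α))
          intro ω₁
          exact hC (z ω₁)
      _ = (1 - α) * ∫ ω, ‖z ω‖ ^ 2 ∂μ₁ := integral_const_mul _ _
  -- step 2: variance decomposition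
  have step2 : ∫ ω, ‖z ω‖ ^ 2 ∂μ₁ ≤ ‖m‖ ^ 2 + η ^ 2 * σ ^ 2 := by
    have hexp : (fun ω => ‖z ω‖ ^ 2)
        = fun ω => ‖m‖ ^ 2 + 2 * inner ℝ m (η • e ω) + ‖η • e ω‖ ^ 2 := by
      funext ω
      rw [hz_eq]
      exact norm_add_sq_real m (η • e ω)
    have hi1 : Integrable (fun ω => 2 * inner ℝ m (η • e ω)) μ₁ :=
      ((he_int.smul η).const_inner m).const_mul 2
    have hi2 : Integrable (fun ω => ‖η • e ω‖ ^ 2) μ₁ := by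
      have : MemLp (fun ω => η • e ω) 2 μ₁ := he2.const_smul η
      exact (memLp_two_iff_integrable_sq_norm this.aestronglyMeasurable).mp this
    rw [hexp, integral_add (by exact (integrable_const _).add hi1) hi2,
      integral_add (integrable_const _) hi1, integral_const, probReal_univ,
      smul_eq_mul, one_mul]
    have hηe_int : Integrable (fun ω => η • e ω) μ₁ := he_int.smul η
    have hmid : ∫ ω, 2 * inner ℝ m (η • e ω) ∂μ₁ = 0 := by
      rw [integral_const_mul, integral_inner hηe_int m,
        integral_smul, he_mean, smul_zero, inner_zero_right, mul_zero]
    rw [hmid, add_zero]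
    have hlast : ∫ ω, ‖η • e ω‖ ^ 2 ∂μ₁ ≤ η ^ 2 * σ ^ 2 := by
      have hpt : (fun ω => ‖η • e ω‖ ^ 2) = fun ω => η ^ 2 * ‖e ω‖ ^ 2 := by
        funext ω
        rw [norm_smul, mul_pow, Real.norm_eq_abs, sq_abs]
      rw [hpt, integral_const_mul]
      have h : ∫ ω, ‖e ω‖ ^ 2 ∂μ₁ ≤ σ ^ 2 := hsvar
      exact mul_le_mul_of_nonneg_left h (sq_nonneg η)
    linarith
  -- step 3: bound ‖m‖² via Young with β = α/2
  have hm_eq : m = (v₀ - g₀) + η • (G - v₀) := by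
    rw [hm]
    module
  have step3 : ‖m‖ ^ 2 ≤ (1 + α / 2) * ‖g₀ - v₀‖ ^ 2
      + (1 + 2 / α) * (η ^ 2 * ‖G - v₀‖ ^ 2) := by
    have hy := young_sq (v₀ - g₀) (η • (G - v₀)) (α / 2) (by linarith)
    rw [← hm_eq] at hy
    have h1 : ‖v₀ - g₀‖ = ‖g₀ - v₀‖ := norm_sub_rev _ _
    have h2 : ‖η • (G - v₀)‖ ^ 2 = η ^ 2 * ‖G - v₀‖ ^ 2 := by
      rw [norm_smul, mul_pow, Real.norm_eq_abs, sq_abs]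
    have h3 : 1 / (α / 2) = 2 / α := by
      rw [div_div_eq_mul_div, one_mul]
    rw [h1, h2, h3] at hy
    linarith
  -- step 4: smoothness bound
  have step4 : ‖G - v₀‖ ^ 2 ≤ 2 * ‖v₀ - G₀‖ ^ 2 + 2 * Li ^ 2 * ‖x - x₀‖ ^ 2 := by
    have ht : ‖G - v₀‖ ≤ ‖G - G₀‖ + ‖G₀ - v₀‖ := norm_sub_le_norm_sub_add_norm_sub _ _ _
    have hl : ‖G - G₀‖ ≤ Li * ‖x - x₀‖ := hLip x x₀
    have h1 : ‖G₀ - v₀‖ = ‖v₀ - G₀‖ := norm_sub_rev _ _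
    rw [h1] at ht
    have h2 : (0:ℝ) ≤ ‖G - v₀‖ := norm_nonneg _
    have h3 : (0:ℝ) ≤ ‖v₀ - G₀‖ := norm_nonneg _
    have h4 : (0:ℝ) ≤ Li * ‖x - x₀‖ := mul_nonneg hLi (norm_nonneg _)
    have ht2 : ‖G - v₀‖ ≤ Li * ‖x - x₀‖ + ‖v₀ - G₀‖ := by linarith
    have hsq : ‖G - v₀‖ ^ 2 ≤ (Li * ‖x - x₀‖ + ‖v₀ - G₀‖) ^ 2 :=
      pow_le_pow_left₀ h2 ht2 2
    nlinarith [sq_nonneg (Li * ‖x - x₀‖ - ‖v₀ - G₀‖)]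
  -- final arithmetic
  have hW0 : (0:ℝ) ≤ ‖G - v₀‖ ^ 2 := sq_nonneg _
  have hkey1 : (1 - α) * (1 + α / 2) ≤ 1 - α / 2 := by nlinarith
  have hkey2 : (1 - α) * (1 + 2 / α) ≤ 2 / α := by
    rw [← sub_nonneg]
    have : 2 / α - (1 - α) * (1 + 2 / α) = (α + α ^ 2) / α := by
      field_simp; ring
    rw [this]
    positivity
  have hη2 : (0:ℝ) ≤ η ^ 2 := sq_nonneg η
  have h2α : (0:ℝ) ≤ 2 / α := by positivity
  calc ∫ ω : Ω₁ × Ω₂, ‖C (z ω.1) ω.2 - z ω.1‖ ^ 2 ∂(μ₁.prod μ₂)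
      ≤ (1 - α) * ∫ ω, ‖z ω‖ ^ 2 ∂μ₁ := step1
    _ ≤ (1 - α) * (‖m‖ ^ 2 + η ^ 2 * σ ^ 2) :=
        mul_le_mul_of_nonneg_left step2 h1mα
    _ = (1 - α) * ‖m‖ ^ 2 + (1 - α) * η ^ 2 * σ ^ 2 := by ring
    _ ≤ (1 - α) * ((1 + α / 2) * ‖g₀ - v₀‖ ^ 2
          + (1 + 2 / α) * (η ^ 2 * ‖G - v₀‖ ^ 2)) + (1 - α) * η ^ 2 * σ ^ 2 := by
        have := mul_le_mul_of_nonneg_left step3 h1mα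
        linarith
    _ = ((1 - α) * (1 + α / 2)) * ‖g₀ - v₀‖ ^ 2
          + ((1 - α) * (1 + 2 / α)) * (η ^ 2 * ‖G - v₀‖ ^ 2)
          + (1 - α) * η ^ 2 * σ ^ 2 := by ring
    _ ≤ (1 - α / 2) * ‖g₀ - v₀‖ ^ 2 + (2 / α) * (η ^ 2 * ‖G - v₀‖ ^ 2)
          + (1 - α) * η ^ 2 * σ ^ 2 := by
        have u1 := mul_le_mul_of_nonneg_right hkey1 hA0
        have u2 := mul_le_mul_of_nonneg_right hkey2 (mul_nonneg hη2 hW0)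
        linarith
    _ ≤ (1 - α / 2) * ‖g₀ - v₀‖ ^ 2 + (2 / α) * (η ^ 2 *
          (2 * ‖v₀ - G₀‖ ^ 2 + 2 * Li ^ 2 * ‖x - x₀‖ ^ 2))
          + (1 - α) * η ^ 2 * σ ^ 2 := by
        have u3 := mul_le_mul_of_nonneg_left step4 hη2
        have u4 := mul_le_mul_of_nonneg_left u3 h2α
        linarith
    _ = (1 - α / 2) * ‖g₀ - v₀‖ ^ 2 + (4 * η ^ 2 / α) * ‖v₀ - G₀‖ ^ 2
          + (4 * η ^ 2 * Li ^ 2 / α) * ‖x - x₀‖ ^ 2 + (1 - α) * η ^ 2 * σ ^ 2 := by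
        field_simp
        ring
end

section
/- Let d ≥ 1, η ∈ (0,1], σ ≥ 0, L ≥ 0. Let (Ω, μ) be a probability space, let ℒ : ℝ^d → ℝ be differentiable with L-Lipschitz gradient, fix x₀, x, v₀ ∈ ℝ^d, and let s : Ω → ℝ^d be square-integrable with ∫_Ω s dμ = ∇ℒ(x) and ∫_Ω ‖s(ω) − ∇ℒ(x)‖² dμ(ω) ≤ σ². Define v(ω) = (1−η)v₀ + η·s(ω). Then ∫_Ω ‖v(ω) − ∇ℒ(x)‖² dμ(ω) ≤ (1−η)·‖v₀ − ∇ℒ(x₀)‖² + (L²/η)·‖x − x₀‖² + η²σ². -/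
open MeasureTheory

/-- One-step momentum-deviation recursion (proof of Lemma 4). -/
theorem stmt_9 (d : ℕ) (hd : 1 ≤ d) (η σ L : ℝ)
    (hη : η ∈ Set.Ioc (0 : ℝ) 1) (hσ : 0 ≤ σ) (hL : 0 ≤ L)
    {Ω : Type*} [MeasurableSpace Ω] (μ : Measure Ω) [IsProbabilityMeasure μ]
    (ℒ : EuclideanSpace ℝ (Fin d) → ℝ)
    (hdiff : Differentiable ℝ ℒ)
    (hLip : ∀ x y, ‖gradient ℒ x - gradient ℒ y‖ ≤ L * ‖x - y‖)
    (x₀ x v₀ : EuclideanSpace ℝ (Fin d))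
    (s : Ω → EuclideanSpace ℝ (Fin d))
    (hs2 : MemLp s 2 μ)
    (hsmean : ∫ ω, s ω ∂μ = gradient ℒ x)
    (hsvar : ∫ ω, ‖s ω - gradient ℒ x‖ ^ 2 ∂μ ≤ σ ^ 2) :
    ∫ ω, ‖((1 - η) • v₀ + η • s ω) - gradient ℒ x‖ ^ 2 ∂μ ≤
      (1 - η) * ‖v₀ - gradient ℒ x₀‖ ^ 2 + (L ^ 2 / η) * ‖x - x₀‖ ^ 2
        + η ^ 2 * σ ^ 2 := by
  obtain ⟨hη0, hη1⟩ := hη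
  set g := gradient ℒ x with hg
  set a := (1 - η) • (v₀ - g) with ha
  set e : Ω → EuclideanSpace ℝ (Fin d) := fun ω => s ω - g with he
  have he2 : MemLp e 2 μ := hs2.sub (memLp_const g)
  have he1 : Integrable e μ := he2.integrable one_le_two
  have hemean : ∫ ω, e ω ∂μ = 0 := by
    rw [integral_sub (hs2.integrable one_le_two) (integrable_const g), hsmean,
      integral_const]
    simp
  have hIsq : Integrable (fun ω => ‖e ω‖ ^ 2) μ := he2.norm.integrable_sq
  have hIinner : Integrable (fun ω => (inner ℝ a (e ω) : ℝ)) μ := he1.const_inner a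
  have hpt : ∀ ω, ‖((1 - η) • v₀ + η • s ω) - g‖ ^ 2
      = ‖a‖ ^ 2 + (2 * η) * (inner ℝ a (e ω) : ℝ) + η ^ 2 * ‖e ω‖ ^ 2 := by
    intro ω
    have h1 : ((1 - η) • v₀ + η • s ω) - g = a + η • e ω := by
      simp only [ha, he]
      module
    have h2 : ‖η • e ω‖ ^ 2 = η ^ 2 * ‖e ω‖ ^ 2 := by
      rw [norm_smul, mul_pow, Real.norm_eq_abs, sq_abs]
    rw [h1, norm_add_sq_real, real_inner_smul_right, h2]
    ring
  have hint : ∫ ω, ‖((1 - η) • v₀ + η • s ω) - g‖ ^ 2 ∂μ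
      = ‖a‖ ^ 2 + η ^ 2 * ∫ ω, ‖e ω‖ ^ 2 ∂μ := by
    simp_rw [hpt]
    rw [integral_add (by exact (integrable_const _).add (hIinner.const_mul _))
        (hIsq.const_mul _),
      integral_add (integrable_const _) (hIinner.const_mul _),
      integral_const, integral_const_mul, integral_inner he1, hemean,
      integral_const_mul]
    simp
  rw [hint]
  -- scalar estimates
  set P := ‖v₀ - gradient ℒ x₀‖ with hP
  set D := ‖x - x₀‖ with hD
  have hQ : ‖gradient ℒ x₀ - g‖ ≤ L * D := by
    rw [hD, norm_sub_rev x x₀]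
    exact hLip x₀ x
  have hR : ‖v₀ - g‖ ≤ P + ‖gradient ℒ x₀ - g‖ := by
    calc ‖v₀ - g‖ = ‖(v₀ - gradient ℒ x₀) + (gradient ℒ x₀ - g)‖ := by abel_nf
    _ ≤ _ := norm_add_le _ _
  have hanorm : ‖a‖ ^ 2 = (1 - η) ^ 2 * ‖v₀ - g‖ ^ 2 := by
    rw [ha, norm_smul, mul_pow, Real.norm_eq_abs, sq_abs]
  have hkey : ‖a‖ ^ 2 ≤ (1 - η) * P ^ 2 + (L ^ 2 / η) * D ^ 2 := by
    rw [hanorm]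
    set Q := ‖gradient ℒ x₀ - g‖ with hQdef
    have hQ0 : 0 ≤ Q := norm_nonneg _
    have hP0 : 0 ≤ P := norm_nonneg _
    have hR0 : 0 ≤ ‖v₀ - g‖ := norm_nonneg _
    have h1 : (1 - η) ^ 2 * ‖v₀ - g‖ ^ 2 ≤ (1 - η) ^ 2 * (P + Q) ^ 2 := by
      apply mul_le_mul_of_nonneg_left _ (sq_nonneg _)
      exact pow_le_pow_left₀ hR0 hR 2
    have ht0 : (0:ℝ) ≤ 1 - η := by linarith
    have e1 : (0:ℝ) ≤ (1 - η) * (η * P - (1 - η) * Q) ^ 2 :=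
      mul_nonneg ht0 (sq_nonneg _)
    have e2 : (0:ℝ) ≤ (1 - (1 - η) ^ 2) * Q ^ 2 :=
      mul_nonneg (by nlinarith [mul_nonneg hη0.le (by linarith : (0:ℝ) ≤ 2 - η)]) (sq_nonneg Q)
    have eid : η * ((1 - η) * P ^ 2) + Q ^ 2 - η * ((1 - η) ^ 2 * (P + Q) ^ 2)
        = (1 - η) * (η * P - (1 - η) * Q) ^ 2 + (1 - (1 - η) ^ 2) * Q ^ 2 := by ring
    have h2 : η * ((1 - η) ^ 2 * (P + Q) ^ 2) ≤ η * ((1 - η) * P ^ 2) + Q ^ 2 := by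
      linarith [e1, e2, eid.ge, eid.le]
    have h3 : Q ^ 2 ≤ L ^ 2 * D ^ 2 := by
      rw [← mul_pow]
      exact pow_le_pow_left₀ hQ0 hQ 2
    calc (1 - η) ^ 2 * ‖v₀ - g‖ ^ 2 ≤ (1 - η) ^ 2 * (P + Q) ^ 2 := h1
      _ = (η * ((1 - η) ^ 2 * (P + Q) ^ 2)) / η := by field_simp
      _ ≤ (η * ((1 - η) * P ^ 2) + L ^ 2 * D ^ 2) / η := by
          apply div_le_div_of_nonneg_right _ hη0.le
          linarith
      _ = (1 - η) * P ^ 2 + (L ^ 2 / η) * D ^ 2 := by field_simp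
  have hvar : ∫ ω, ‖e ω‖ ^ 2 ∂μ ≤ σ ^ 2 := hsvar
  have := mul_le_mul_of_nonneg_left hvar (sq_nonneg η)
  linarith
end
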